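/- Let (I_α)_{α∈A} be a countable family of pairwise non-overlapping compact subintervals of [0,d] with nonempty interiors, and let (μ_α)_{α∈A} be positive reals with ∑_{α∈A} μ_α < ∞. Then there exist d' > 0 and an increasing homeomorphism Ψ : [0,d'] → [0,d] such that λ(Ψ^{-1}(I_α)) = μ_α for every α and Ψ^{-1} is absolutely continuous. -/

import Mathlib

open MeasureTheory
open scoped ENNReal

/-- Absolute continuity of a real function on `[a,b]` (ε–δ definition). -/
def AbsolutelyContinuousOn (g : ℝ → ℝ) (a b : ℝ) : Prop :=
  ∀ ε > (0:ℝ), ∃ δ > (0:ℝ), ∀ (n : ℕ) (u v : Fin n → ℝ),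
    (∀ k, a ≤ u k ∧ u k ≤ v k ∧ v k ≤ b) →
    (Pairwise (Function.onFun Disjoint fun k => Set.Ioo (u k) (v k))) →
    (∑ k, (v k - u k)) < δ → (∑ k, |g (v k) - g (u k)|) < ε

/-- Lemma: reparametrization of `[0,d]` so that the preimage of each interval `I_α`
has prescribed measure `μ_α`, with absolutely continuous inverse. -/
theorem stmt_11 (d : ℝ) (hd : 0 < d)
    (A : Type*) [Countable A] (l r : A → ℝ)
    (hlr : ∀ α, 0 ≤ l α ∧ l α < r α ∧ r α ≤ d)
    (hdisj : Pairwise (Function.onFun Disjoint fun α => Set.Ioo (l α) (r α)))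
    (μ : A → ℝ) (hμ : ∀ α, 0 < μ α) (hsum : Summable μ) :
    ∃ d' > (0:ℝ), ∃ Ψ Φ : ℝ → ℝ,
      StrictMonoOn Ψ (Set.Icc 0 d') ∧
      ContinuousOn Ψ (Set.Icc 0 d') ∧
      Ψ '' Set.Icc 0 d' = Set.Icc 0 d ∧
      (∀ x ∈ Set.Icc 0 d', Φ (Ψ x) = x) ∧
      (∀ y ∈ Set.Icc 0 d, Ψ (Φ y) = y) ∧
      (∀ α, volume (Set.Icc 0 d' ∩ Ψ ⁻¹' Set.Icc (l α) (r α)) = ENNReal.ofReal (μ α)) ∧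
      AbsolutelyContinuousOn Φ 0 d := by
  classical
  set c : A → ℝ := fun α => μ α / (r α - l α) with hc
  have hcpos : ∀ α, 0 < c α := fun α => div_pos (hμ α) (by linarith [(hlr α).2.1])
  set U : Set ℝ := ⋃ α, Set.Ioo (l α) (r α) with hUdef
  have hUmeas : MeasurableSet U := MeasurableSet.iUnion fun α => measurableSet_Ioo
  set T : ℝ → ℝ≥0∞ := fun y =>
    ∑' α, Set.indicator (Set.Ioo (l α) (r α)) (fun _ => ENNReal.ofReal (c α)) y with hTdef
  have hTmeas : Measurable T :=
    Measurable.ennreal_tsum fun α => measurable_const.indicator measurableSet_Ioo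
  set W : ℝ → ℝ≥0∞ := fun y => T y + Set.indicator Uᶜ (fun _ => 1) y with hWdef
  have hWmeas : Measurable W := hTmeas.add (measurable_const.indicator hUmeas.compl)
  -- pointwise values
  have hT_mem : ∀ α y, y ∈ Set.Ioo (l α) (r α) → T y = ENNReal.ofReal (c α) := by
    intro α y hy
    have hTy : T y = ∑' β, Set.indicator (Set.Ioo (l β) (r β)) (fun _ => ENNReal.ofReal (c β)) y :=
      rfl
    rw [hTy, tsum_eq_single α]
    · simp [Set.indicator_of_mem hy]
    · intro β hβ
      have hyβ : y ∉ Set.Ioo (l β) (r β) := fun h =>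
        Set.disjoint_left.mp (hdisj hβ) h hy
      simp [Set.indicator_of_notMem hyβ]
  have hWU : ∀ α y, y ∈ Set.Ioo (l α) (r α) → W y = ENNReal.ofReal (c α) := by
    intro α y hy
    have hyU : y ∈ U := Set.mem_iUnion.2 ⟨α, hy⟩
    have : y ∉ Uᶜ := fun h => h hyU
    simp [hWdef, hT_mem α y hy, Set.indicator_of_notMem this]
  have hWc : ∀ y, y ∉ U → W y = 1 := by
    intro y hy
    have hT0 : T y = 0 := by
      rw [hTdef]
      refine ENNReal.tsum_eq_zero.2 fun β => ?_
      exact Set.indicator_of_notMem (fun h => hy (Set.mem_iUnion.2 ⟨β, h⟩)) _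
    simp [hWdef, hT0, Set.indicator_of_mem (Set.mem_compl hy)]
  have hWpos : ∀ y, 0 < W y := by
    intro y
    by_cases hy : y ∈ U
    · obtain ⟨α, hα⟩ := Set.mem_iUnion.1 hy
      rw [hWU α y hα]
      exact ENNReal.ofReal_pos.2 (hcpos α)
    · rw [hWc y hy]; exact one_pos
  have hWfin : ∀ y, W y < ⊤ := by
    intro y
    by_cases hy : y ∈ U
    · obtain ⟨α, hα⟩ := Set.mem_iUnion.1 hy
      rw [hWU α y hα]; exact ENNReal.ofReal_lt_top
    · rw [hWc y hy]; exact ENNReal.one_lt_top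
  set w : ℝ → ℝ := fun y => (W y).toReal with hwdef
  have hwpos : ∀ y, 0 < w y := fun y => ENNReal.toReal_pos (hWpos y).ne' (hWfin y).ne
  -- global bound on set lintegrals of W
  have hSum : ∀ s : Set ℝ, ∫⁻ y in s, W y ≤ ENNReal.ofReal (∑' α, μ α) + volume s := by
    intro s
    have h1 : ∫⁻ y in s, W y = (∫⁻ y in s, T y) + ∫⁻ y in s, Set.indicator Uᶜ (fun _ => 1) y :=
      lintegral_add_left hTmeas _
    have h2 : ∫⁻ y in s, T y ≤ ENNReal.ofReal (∑' α, μ α) := by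
      rw [hTdef]
      calc ∫⁻ y in s, ∑' α, Set.indicator (Set.Ioo (l α) (r α)) (fun _ => ENNReal.ofReal (c α)) y
          = ∑' α, ∫⁻ y in s, Set.indicator (Set.Ioo (l α) (r α)) (fun _ => ENNReal.ofReal (c α)) y :=
            lintegral_tsum fun α => (measurable_const.indicator measurableSet_Ioo).aemeasurable
        _ ≤ ∑' α, ENNReal.ofReal (μ α) := by
            refine ENNReal.tsum_le_tsum fun α => ?_
            calc ∫⁻ y in s, Set.indicator (Set.Ioo (l α) (r α)) (fun _ => ENNReal.ofReal (c α)) y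
                ≤ ∫⁻ y, Set.indicator (Set.Ioo (l α) (r α)) (fun _ => ENNReal.ofReal (c α)) y :=
                  setLIntegral_le_lintegral _ _
              _ = ENNReal.ofReal (c α) * volume (Set.Ioo (l α) (r α)) :=
                  lintegral_indicator_const measurableSet_Ioo _
              _ = ENNReal.ofReal (μ α) := by
                  rw [Real.volume_Ioo, ← ENNReal.ofReal_mul (hcpos α).le]
                  congr 1
                  show μ α / (r α - l α) * (r α - l α) = μ α
                  exact div_mul_cancel₀ _ (by linarith [(hlr α).2.1] : r α - l α ≠ 0)
        _ = ENNReal.ofReal (∑' α, μ α) :=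
            (ENNReal.ofReal_tsum_of_nonneg (fun α => (hμ α).le) hsum).symm
    have h3 : ∫⁻ y in s, Set.indicator Uᶜ (fun _ => 1) y ≤ volume s := by
      calc ∫⁻ y in s, Set.indicator Uᶜ (fun _ => 1) y ≤ ∫⁻ _ in s, 1 :=
            lintegral_mono fun y => Set.indicator_le_self' (fun _ _ => zero_le_one) y
        _ = volume s := by simp
    rw [h1]; exact add_le_add h2 h3
  have hfinIoc : ∀ a b : ℝ, ∫⁻ y in Set.Ioc a b, W y ≠ ⊤ := by
    intro a b
    refine ((hSum _).trans_lt ?_).ne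
    rw [Real.volume_Ioc]
    exact ENNReal.add_lt_top.2 ⟨ENNReal.ofReal_lt_top, ENNReal.ofReal_lt_top⟩
  have hInt : ∀ a b : ℝ, IntervalIntegrable w volume a b := by
    intro a b
    rw [intervalIntegrable_iff]
    have : Set.uIoc a b = Set.Ioc (min a b) (max a b) := rfl
    rw [this]
    exact integrable_toReal_of_lintegral_ne_top hWmeas.aemeasurable.restrict (hfinIoc _ _)
  set Φ : ℝ → ℝ := fun y => ∫ t in (0:ℝ)..y, w t with hΦdef
  have hΦcont : Continuous Φ := intervalIntegral.continuous_primitive hInt 0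
  have hΦsub : ∀ a b : ℝ, Φ b - Φ a = ∫ t in a..b, w t := fun a b =>
    intervalIntegral.integral_interval_sub_left (hInt 0 b) (hInt 0 a)
  have hΦmono : StrictMono Φ := by
    intro a b hab
    have h := intervalIntegral.intervalIntegral_pos_of_pos_on (hInt a b)
      (fun x _ => hwpos x) hab
    have := hΦsub a b
    linarith
  have hkey : ∀ u v : ℝ, u ≤ v → ∫ t in u..v, w t = (∫⁻ y in Set.Ioc u v, W y).toReal := by
    intro u v huv
    rw [intervalIntegral.integral_of_le huv]
    exact integral_toReal hWmeas.aemeasurable.restrict (ae_of_all _ fun y => hWfin y)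
  -- the crucial value on each interval
  have hL2 : ∀ α, ∫⁻ y in Set.Ioc (l α) (r α), W y = ENNReal.ofReal (μ α) := by
    intro α
    have hA : ∫⁻ y in Set.Ioc (l α) (r α), T y = ENNReal.ofReal (μ α) := by
      rw [hTdef,
        lintegral_tsum fun β => (measurable_const.indicator measurableSet_Ioo).aemeasurable]
      rw [tsum_eq_single α]
      · rw [lintegral_indicator_const measurableSet_Ioo,
          Measure.restrict_apply measurableSet_Ioo]
        have : Set.Ioo (l α) (r α) ∩ Set.Ioc (l α) (r α) = Set.Ioo (l α) (r α) :=
          Set.inter_eq_left.2 Set.Ioo_subset_Ioc_self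
        rw [this, Real.volume_Ioo, ← ENNReal.ofReal_mul (hcpos α).le]
        congr 1
        show μ α / (r α - l α) * (r α - l α) = μ α
        exact div_mul_cancel₀ _ (by linarith [(hlr α).2.1] : r α - l α ≠ 0)
      · intro β hβ
        rw [lintegral_indicator_const measurableSet_Ioo,
          Measure.restrict_apply measurableSet_Ioo]
        have hsub : Set.Ioo (l β) (r β) ∩ Set.Ioc (l α) (r α) ⊆ {r α} := by
          intro y ⟨hy1, hy2⟩
          by_contra hne
          have : y ∈ Set.Ioo (l α) (r α) := ⟨hy2.1, lt_of_le_of_ne hy2.2 hne⟩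
          exact Set.disjoint_left.mp (hdisj hβ) hy1 this
        rw [measure_mono_null hsub (measure_singleton _), mul_zero]
    have hB : ∫⁻ y in Set.Ioc (l α) (r α), Set.indicator Uᶜ (fun _ => 1) y = 0 := by
      rw [lintegral_indicator_const hUmeas.compl, Measure.restrict_apply hUmeas.compl]
      have hsub : Uᶜ ∩ Set.Ioc (l α) (r α) ⊆ {r α} := by
        intro y ⟨hy1, hy2⟩
        by_contra hne
        exact hy1 (Set.mem_iUnion.2 ⟨α, hy2.1, lt_of_le_of_ne hy2.2 hne⟩)
      rw [measure_mono_null hsub (measure_singleton _), mul_zero]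
    rw [hWdef]
    rw [lintegral_add_left hTmeas, hA, hB, add_zero]
  have hΦint : ∀ α, Φ (r α) - Φ (l α) = μ α := by
    intro α
    rw [hΦsub, hkey _ _ (hlr α).2.1.le, hL2, ENNReal.toReal_ofReal (hμ α).le]
  -- w = 1 outside (0, d)
  have hwout : ∀ y, y ∉ Set.Ioo (0:ℝ) d → w y = 1 := by
    intro y hy
    have hyU : y ∉ U := by
      intro h
      obtain ⟨α, hα⟩ := Set.mem_iUnion.1 h
      exact hy ⟨lt_of_le_of_lt (hlr α).1 hα.1, lt_of_lt_of_le hα.2 (hlr α).2.2⟩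
    simp [hwdef, hWc y hyU]
  have hΦ0 : Φ 0 = 0 := intervalIntegral.integral_same
  have hΦdpos : 0 < Φ d := by
    have := hΦmono hd
    rw [hΦ0] at this; exact this
  have hneg : ∀ y : ℝ, y ≤ 0 → Φ y = y := by
    intro y hy
    have : Φ y = ∫ t in (0:ℝ)..y, (1:ℝ) := by
      refine intervalIntegral.integral_congr fun t ht => ?_
      rw [Set.uIcc_of_ge hy] at ht
      exact hwout t (fun h => absurd (h.1.trans_le ht.2) (lt_irrefl 0))
    rw [this]; simp
  have hsurj : Function.Surjective Φ := by
    intro z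
    rcases le_or_gt z 0 with hz | hz
    · exact ⟨z, hneg z hz⟩
    · have h1 : Φ (d + z) - Φ d = z := by
        rw [hΦsub]
        have : ∫ t in d..(d + z), w t = ∫ t in d..(d + z), (1:ℝ) := by
          refine intervalIntegral.integral_congr fun t ht => ?_
          rw [Set.uIcc_of_le (by linarith)] at ht
          exact hwout t (fun h => absurd (lt_of_lt_of_le h.2 ht.1) (lt_irrefl t))
        rw [this]; simp
      have hmem : z ∈ Set.Icc (Φ 0) (Φ (d + z)) := by
        constructor
        · rw [hΦ0]; exact hz.le
        · linarith
      obtain ⟨y, _, hy⟩ := intermediate_value_Icc (by linarith : (0:ℝ) ≤ d + z)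
        hΦcont.continuousOn hmem
      exact ⟨y, hy⟩
  set e : ℝ ≃o ℝ := StrictMono.orderIsoOfSurjective Φ hΦmono hsurj with hedef
  have he_apply : ∀ y, e y = Φ y := fun y => rfl
  set Ψ : ℝ → ℝ := ⇑e.symm with hΨdef
  have hΨΦ : ∀ y, Ψ (Φ y) = y := fun y => e.symm_apply_apply y
  have hΦΨ : ∀ x, Φ (Ψ x) = x := fun x => e.apply_symm_apply x
  have hΨmono : StrictMono Ψ := e.symm.strictMono
  set d' : ℝ := Φ d with hd'def
  refine ⟨d', hΦdpos, Ψ, Φ, hΨmono.strictMonoOn _, e.symm.continuous.continuousOn, ?_, 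
    fun x _ => hΦΨ x, fun y _ => hΨΦ y, ?_, ?_⟩
  · -- image
    have h0 : Ψ 0 = 0 := by
      have : Ψ (Φ 0) = 0 := hΨΦ 0
      rwa [hΦ0] at this
    have hdd : Ψ d' = d := hΨΦ d
    rw [hΨdef, e.symm.image_Icc, ← hΨdef, h0, hdd]
  · -- measure of preimages
    intro α
    have hset : Set.Icc 0 d' ∩ Ψ ⁻¹' Set.Icc (l α) (r α) = Set.Icc (Φ (l α)) (Φ (r α)) := by
      ext x
      simp only [Set.mem_inter_iff, Set.mem_Icc, Set.mem_preimage]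
      constructor
      · rintro ⟨⟨hx0, hxd⟩, hl1, hr1⟩
        constructor
        · calc Φ (l α) ≤ Φ (Ψ x) := hΦmono.monotone hl1
            _ = x := hΦΨ x
        · calc x = Φ (Ψ x) := (hΦΨ x).symm
            _ ≤ Φ (r α) := hΦmono.monotone hr1
      · rintro ⟨h1, h2⟩
        have h0l : 0 ≤ Φ (l α) := by
          rw [← hΦ0]; exact hΦmono.monotone (hlr α).1
        have hrd : Φ (r α) ≤ d' := hΦmono.monotone (hlr α).2.2
        refine ⟨⟨h0l.trans h1, h2.trans hrd⟩, ?_, ?_⟩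
        · calc l α = Ψ (Φ (l α)) := (hΨΦ _).symm
            _ ≤ Ψ x := hΨmono.monotone h1
        · calc Ψ x ≤ Ψ (Φ (r α)) := hΨmono.monotone h2
            _ = r α := hΨΦ _
    rw [hset, Real.volume_Icc, hΦint α]
  · -- absolute continuity
    intro ε hε
    set f : ℝ → ℝ≥0∞ := fun y => Set.indicator (Set.Icc 0 d) W y with hfdef
    have hfmeas : Measurable f := hWmeas.indicator measurableSet_Icc
    have hffin : ∫⁻ y, f y ≠ ⊤ := by
      rw [hfdef, lintegral_indicator measurableSet_Icc]
      refine ((hSum _).trans_lt ?_).ne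
      rw [Real.volume_Icc]
      exact ENNReal.add_lt_top.2 ⟨ENNReal.ofReal_lt_top, ENNReal.ofReal_lt_top⟩
    obtain ⟨δ, hδ0, hδ⟩ := exists_pos_setLIntegral_lt_of_measure_lt hffin
      (ENNReal.ofReal_pos.2 hε).ne'
    obtain ⟨δr, _, hδr1, hδr2⟩ := ENNReal.lt_iff_exists_real_btwn.1 hδ0
    have hδrpos : 0 < δr := ENNReal.ofReal_pos.1 (by simpa using hδr1)
    refine ⟨δr, hδrpos, ?_⟩
    intro n u v hb hdisj' hsum'
    set s : Set ℝ := ⋃ k, Set.Ioo (u k) (v k) with hsdef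
    have hsmeas : ∀ k, MeasurableSet (Set.Ioo (u k) (v k)) := fun k => measurableSet_Ioo
    have hsvol : volume s < δ := by
      calc volume s ≤ ∑' k, volume (Set.Ioo (u k) (v k)) := measure_iUnion_le _
        _ = ∑ k, volume (Set.Ioo (u k) (v k)) := tsum_fintype _
        _ = ∑ k, ENNReal.ofReal (v k - u k) := by
            refine Finset.sum_congr rfl fun k _ => ?_
            rw [Real.volume_Ioo]
        _ = ENNReal.ofReal (∑ k, (v k - u k)) := by
            rw [ENNReal.ofReal_sum_of_nonneg fun k _ => by linarith [(hb k).2.1]]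
        _ < ENNReal.ofReal δr := ENNReal.ofReal_lt_ofReal_iff hδrpos |>.2 hsum'
        _ < δ := hδr2
    have hsf := hδ s hsvol
    have hterm : ∀ k, |Φ (v k) - Φ (u k)| = (∫⁻ y in Set.Ioo (u k) (v k), f y).toReal := by
      intro k
      obtain ⟨h0, huv, hvd⟩ := hb k
      have hsub : Set.Ioc (u k) (v k) ⊆ Set.Icc 0 d := fun y hy =>
        ⟨h0.trans hy.1.le, hy.2.trans hvd⟩
      rw [abs_of_nonneg (by linarith [hΦmono.monotone huv] : (0:ℝ) ≤ Φ (v k) - Φ (u k))]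
      rw [hΦsub, hkey _ _ huv]
      have h1 : ∫⁻ y in Set.Ioc (u k) (v k), W y = ∫⁻ y in Set.Ioc (u k) (v k), f y :=
        setLIntegral_congr_fun measurableSet_Ioc
          (fun y hy => (Set.indicator_of_mem (hsub hy) _).symm)
      have h2 : ∫⁻ y in Set.Ioo (u k) (v k), f y = ∫⁻ y in Set.Ioc (u k) (v k), f y :=
        setLIntegral_congr Ioo_ae_eq_Ioc
      rw [h1, ← h2]
    calc ∑ k, |Φ (v k) - Φ (u k)|
        = ∑ k, (∫⁻ y in Set.Ioo (u k) (v k), f y).toReal := by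
          exact Finset.sum_congr rfl fun k _ => hterm k
      _ = (∑ k, ∫⁻ y in Set.Ioo (u k) (v k), f y).toReal := by
          rw [ENNReal.toReal_sum]
          intro k _
          exact ((setLIntegral_le_lintegral _ _).trans_lt (lt_top_iff_ne_top.2 hffin)).ne
      _ = (∫⁻ y in s, f y).toReal := by
          rw [hsdef, lintegral_iUnion hsmeas hdisj', tsum_fintype]
      _ < ε := by
          have hne : ∫⁻ y in s, f y ≠ ⊤ := (hsf.trans ENNReal.ofReal_lt_top).ne
          exact (ENNReal.lt_ofReal_iff_toReal_lt hne).1 hsf
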